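/- Let R_4(y) = ((y+2)/2)·ln y − ((y+4)/2)·ln(y + 4(1 − √((4+y)/(2(y−2))))) + ln(2y + 4(y+4)(1 − √((4+y)/(2(y−2))))). Then R_4 is strictly decreasing on [15, ∞); that is, for all real numbers y1, y2 with 15 ≤ y1 < y2, R_4(y2) < R_4(y1). -/

import Mathlib

set_option maxHeartbeats 2000000

/-- `R₄(y) = ((y+2)/2)·ln y − ((y+4)/2)·ln(y + 4(1 − √((4+y)/(2(y−2)))))
  + ln(2y + 4(y+4)(1 − √((4+y)/(2(y−2)))))`. -/
noncomputable def R4 (y : ℝ) : ℝ :=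
  (y + 2) / 2 * Real.log y -
    (y + 4) / 2 * Real.log (y + 4 * (1 - Real.sqrt ((4 + y) / (2 * (y - 2))))) +
    Real.log (2 * y + 4 * (y + 4) * (1 - Real.sqrt ((4 + y) / (2 * (y - 2)))))

lemma aux_neg (y s : ℝ) (hy : 15 ≤ y) (hs0 : 0 < s) (hrel : 2*(y-2)*s^2 = 4+y) :
    Real.log y / 2 + (y + 2) / (2 * y)
      - Real.log (y + 4 * (1 - s)) / 2
      - (y + 4) / 2 * ((1 + 6 / (s * (y - 2) ^ 2)) / (y + 4 * (1 - s)))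
      + (2 + (4 * (1 - s) + 6 * (y + 4) / (s * (y - 2) ^ 2))) / (2 * y + 4 * (y + 4) * (1 - s)) < 0 := by
  have hy2 : (0:ℝ) < y - 2 := by linarith
  have hy0 : (0:ℝ) < y := by linarith
  have hs1 : s < 1 := by
    by_contra hc
    push_neg at hc
    have h1 : 1 ≤ s^2 := by nlinarith
    nlinarith
  have hApos : 0 < y + 4*(1-s) := by nlinarith
  have hBpos : 0 < 2*y + 4*(y+4)*(1-s) := by nlinarith
  -- the key polynomial inequality
  have ht : (0:ℝ) ≤ y - 15 := by linarith
  have hb : (0:ℝ) < 15*y^4 - 12*y^3 - 60*y^2 + 48*y := by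
    nlinarith [pow_nonneg ht 4, pow_nonneg ht 3, sq_nonneg (y-15)]
  have ha : -11*y^4 - 28*y^3 + 108*y^2 + 112*y - 256 < 0 := by
    nlinarith [pow_nonneg ht 4, pow_nonneg ht 3, sq_nonneg (y-15)]
  have hP : 0 < 2*(y-2)*(-11*y^4 - 28*y^3 + 108*y^2 + 112*y - 256)^2
      - (y+4)*(15*y^4 - 12*y^3 - 60*y^2 + 48*y)^2 := by
    nlinarith [pow_nonneg ht 9, pow_nonneg ht 8, pow_nonneg ht 7, pow_nonneg ht 6,
      pow_nonneg ht 5, pow_nonneg ht 4, pow_nonneg ht 3, sq_nonneg (y-15), ht]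
  have h2 : 2*(y-2)*((15*y^4 - 12*y^3 - 60*y^2 + 48*y)*s)^2
      = (15*y^4 - 12*y^3 - 60*y^2 + 48*y)^2*(4+y) := by
    linear_combination (15*y^4 - 12*y^3 - 60*y^2 + 48*y)^2 * hrel
  have h5 : ((15*y^4 - 12*y^3 - 60*y^2 + 48*y)*s)^2 < (-11*y^4 - 28*y^3 + 108*y^2 + 112*y - 256)^2 := by
    nlinarith [hP, h2, hy2]
  have hbs : 0 < (15*y^4 - 12*y^3 - 60*y^2 + 48*y)*s := mul_pos hb hs0
  have h4 : 0 < (15*y^4 - 12*y^3 - 60*y^2 + 48*y)*s - (-11*y^4 - 28*y^3 + 108*y^2 + 112*y - 256) := by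
    linarith
  have key : (-11*y^4 - 28*y^3 + 108*y^2 + 112*y - 256) + (15*y^4 - 12*y^3 - 60*y^2 + 48*y)*s < 0 := by
    nlinarith [h5, h4, hbs, ha]
  have hmul : ((y/(y + 4*(1-s)) - 1)/2 + (y+2)/(2*y)
      - (y+4)/2 * ((1 + 6/(s*(y-2)^2))/(y + 4*(1-s)))
      + (2 + (4*(1-s) + 6*(y+4)/(s*(y-2)^2)))/(2*y + 4*(y+4)*(1-s)))
      * (2*(y-2)*(2*y*(s*((y-2)^2*((y + 4*(1-s))*(2*y + 4*(y+4)*(1-s))))))) =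
      16*((-11*y^4 - 28*y^3 + 108*y^2 + 112*y - 256) + (15*y^4 - 12*y^3 - 60*y^2 + 48*y)*s) := by
    have hBne : y * 2 + 4 * (1 - s) * (y + 4) ≠ 0 := by nlinarith
    field_simp
    linear_combination (64*y^3*s - 128*y^3 - 128*y^2*s + 256*y^2 - 256*y*s + 512*y + 512*s - 1024) * hrel
  have hDtot : 0 < 2*(y-2)*(2*y*(s*((y-2)^2*((y + 4*(1-s))*(2*y + 4*(y+4)*(1-s)))))) := by
    have h6 : (0:ℝ) < (y-2)^2 := by positivity
    exact mul_pos (by linarith) (mul_pos (by linarith) (mul_pos hs0 (mul_pos h6 (mul_pos hApos hBpos))))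
  have hG2v : (y/(y + 4*(1-s)) - 1)/2 + (y+2)/(2*y)
      - (y+4)/2 * ((1 + 6/(s*(y-2)^2))/(y + 4*(1-s)))
      + (2 + (4*(1-s) + 6*(y+4)/(s*(y-2)^2)))/(2*y + 4*(y+4)*(1-s)) < 0 := by
    by_contra hc
    push_neg at hc
    have h7 := mul_nonneg hc hDtot.le
    rw [hmul] at h7
    linarith
  have hlog : Real.log y - Real.log (y + 4*(1-s)) ≤ y/(y + 4*(1-s)) - 1 := by
    have h8 : Real.log (y/(y + 4*(1-s))) ≤ y/(y + 4*(1-s)) - 1 :=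
      Real.log_le_sub_one_of_pos (div_pos hy0 hApos)
    rwa [Real.log_div (ne_of_gt hy0) (ne_of_gt hApos)] at h8
  linarith

lemma R4_hasDerivAt (y : ℝ) (hy : 15 ≤ y) :
    HasDerivAt R4
      (Real.log y / 2 + (y + 2) / (2 * y)
        - Real.log (y + 4 * (1 - Real.sqrt ((4 + y) / (2 * (y - 2))))) / 2
        - (y + 4) / 2 *
          ((1 + 6 / (Real.sqrt ((4 + y) / (2 * (y - 2))) * (y - 2) ^ 2)) /
            (y + 4 * (1 - Real.sqrt ((4 + y) / (2 * (y - 2))))))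
        + (2 + (4 * (1 - Real.sqrt ((4 + y) / (2 * (y - 2))))
            + 6 * (y + 4) / (Real.sqrt ((4 + y) / (2 * (y - 2))) * (y - 2) ^ 2))) /
          (2 * y + 4 * (y + 4) * (1 - Real.sqrt ((4 + y) / (2 * (y - 2)))))) y := by
  have hy2 : (0:ℝ) < y - 2 := by linarith
  have hy0 : (0:ℝ) < y := by linarith
  have h2y2 : (2*(y-2)) ≠ 0 := by positivity
  have hgpos : 0 < (4 + y) / (2 * (y - 2)) := by positivity
  set s := Real.sqrt ((4 + y) / (2 * (y - 2))) with hsdef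
  have hs0 : 0 < s := Real.sqrt_pos.mpr hgpos
  have hs2 : s ^ 2 = (4 + y) / (2 * (y - 2)) := Real.sq_sqrt hgpos.le
  have hrel : 2*(y-2)*s^2 = 4+y := by rw [hs2]; field_simp
  have hs1 : s < 1 := by
    by_contra hc
    push_neg at hc
    have h1 : 1 ≤ s^2 := by nlinarith
    nlinarith
  have hApos : 0 < y + 4*(1-s) := by nlinarith
  have hBpos : 0 < 2*y + 4*(y+4)*(1-s) := by nlinarith
  -- derivative of inner rational function
  have h1 : HasDerivAt (fun x : ℝ => 4 + x) 1 y := by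
    simpa using (hasDerivAt_id y).const_add (4:ℝ)
  have h2 : HasDerivAt (fun x : ℝ => 2 * (x - 2)) 2 y := by
    simpa using ((hasDerivAt_id y).sub_const (2:ℝ)).const_mul (2:ℝ)
  have hg : HasDerivAt (fun x : ℝ => (4 + x) / (2 * (x - 2)))
      ((1 * (2*(y-2)) - (4+y) * 2) / (2*(y-2))^2) y := h1.div h2 h2y2
  -- derivative of sqrt
  have hgne : (4 + y) / (2 * (y - 2)) ≠ 0 := ne_of_gt hgpos
  have hsq : HasDerivAt (fun x : ℝ => Real.sqrt ((4 + x) / (2 * (x - 2))))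
      ((1 * (2*(y-2)) - (4+y) * 2) / (2*(y-2))^2 / (2 * s)) y := hg.sqrt hgne
  -- 1 - s
  have h1ms : HasDerivAt (fun x : ℝ => 1 - Real.sqrt ((4 + x) / (2 * (x - 2))))
      (-((1 * (2*(y-2)) - (4+y) * 2) / (2*(y-2))^2 / (2 * s))) y := hsq.const_sub 1
  -- A
  have hA : HasDerivAt (fun x : ℝ => x + 4 * (1 - Real.sqrt ((4 + x) / (2 * (x - 2)))))
      (1 + 4 * -((1 * (2*(y-2)) - (4+y) * 2) / (2*(y-2))^2 / (2 * s))) y :=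
    (hasDerivAt_id y).add (h1ms.const_mul 4)
  have hAne : y + 4 * (1 - s) ≠ 0 := ne_of_gt hApos
  have hlogA := hA.log hAne
  -- (x+4)/2 and (x+2)/2
  have hu4 : HasDerivAt (fun x : ℝ => (x + 4) / 2) (1/2) y := by
    simpa using ((hasDerivAt_id y).add_const (4:ℝ)).div_const 2
  have hu2 : HasDerivAt (fun x : ℝ => (x + 2) / 2) (1/2) y := by
    simpa using ((hasDerivAt_id y).add_const (2:ℝ)).div_const 2
  have hterm1 := hu2.mul (Real.hasDerivAt_log (ne_of_gt hy0))
  have hterm2 := hu4.mul hlogA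
  -- B
  have hc2 : HasDerivAt (fun x : ℝ => 2 * x) 2 y := by
    simpa using (hasDerivAt_id y).const_mul (2:ℝ)
  have hp4 : HasDerivAt (fun x : ℝ => 4 * (x + 4)) 4 y := by
    simpa using ((hasDerivAt_id y).add_const (4:ℝ)).const_mul (4:ℝ)
  have hB := hc2.add ((hp4.mul h1ms))
  have hBne : 2*y + 4*(y+4)*(1-s) ≠ 0 := ne_of_gt hBpos
  have hlogB := hB.log hBne
  have htot := (hterm1.sub hterm2).add hlogB
  have hfinal : HasDerivAt R4
      (1 / 2 * Real.log y + (y + 2) / 2 * y⁻¹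
        - (1 / 2 * Real.log (y + 4 * (1 - s)) + (y + 4) / 2 *
          ((1 + 4 * -((1 * (2*(y-2)) - (4+y) * 2) / (2*(y-2))^2 / (2 * s))) / (y + 4 * (1 - s))))
        + (2 + (4 * (1 - s) + 4 * (y + 4) * -((1 * (2*(y-2)) - (4+y) * 2) / (2*(y-2))^2 / (2 * s)))) /
          (2*y + 4*(y+4)*(1-s))) y := by
    unfold R4
    exact htot
  convert hfinal using 1
  have hsne : s ≠ 0 := ne_of_gt hs0
  have hy2ne : y - 2 ≠ 0 := ne_of_gt hy2
  field_simp
  ring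

lemma R4_deriv_neg (y : ℝ) (hy : 15 ≤ y) : deriv R4 y < 0 := by
  rw [(R4_hasDerivAt y hy).deriv]
  have hy2 : (0:ℝ) < y - 2 := by linarith
  have hgpos : 0 < (4 + y) / (2 * (y - 2)) := by positivity
  have hs0 : 0 < Real.sqrt ((4 + y) / (2 * (y - 2))) := Real.sqrt_pos.mpr hgpos
  have hrel : 2*(y-2)*(Real.sqrt ((4 + y) / (2 * (y - 2))))^2 = 4+y := by
    rw [Real.sq_sqrt hgpos.le]; field_simp
  exact aux_neg y (Real.sqrt ((4 + y) / (2 * (y - 2)))) hy hs0 hrel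

theorem R4_strictAnti (y1 y2 : ℝ) (h1 : 15 ≤ y1) (h12 : y1 < y2) : R4 y2 < R4 y1 := by
  have H : StrictAntiOn R4 (Set.Ici (15:ℝ)) := by
    apply strictAntiOn_of_deriv_neg (convex_Ici 15)
    · exact fun x hx => ((R4_hasDerivAt x hx).continuousAt).continuousWithinAt
    · intro x hx
      rw [interior_Ici] at hx
      exact R4_deriv_neg x (le_of_lt hx)
  exact H (Set.mem_Ici.mpr h1) (Set.mem_Ici.mpr (by linarith)) h12
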